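/- Let N be a (1/2)-net of the unit sphere S^{d−1} and let Δ_t ∈ S^d be symmetric of rank at most 2r and, for each w ∈ N, let Δ_{t,w} ∈ S^d be symmetric of rank at most 2r. Suppose A: S^d → R^m satisfies the RIP of order 2r+2 with constant δ ≤ 1 and that for all w ∈ N, |⟨ww^T, (A*A)(P_{w,⊥}(Δ_{t,w}))⟩| ≤ 4√(d/m) ‖A(P_{w,⊥}(Δ_{t,w}))‖_2, where P_{w,⊥}(Z) = Z − ⟨ww^T,Z⟩ww^T. Then ‖(A*A − I)(Δ_t)‖ ≤ (16√(2rd/m) + 2δ)‖Δ_t‖ + 4(δ + 4√(d/m)) sup_{w∈N} ‖Δ_t − Δ_{t,w}‖_F. -/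

import Mathlib

open scoped BigOperators
open Matrix

noncomputable def frobNorm {d₁ d₂ : ℕ} (A : Matrix (Fin d₁) (Fin d₂) ℝ) : ℝ :=
  Real.sqrt (∑ i, ∑ j, A i j ^ 2)

noncomputable def vecNorm {m : ℕ} (y : Fin m → ℝ) : ℝ :=
  Real.sqrt (∑ i, y i ^ 2)

noncomputable def specNorm {d₁ d₂ : ℕ} (A : Matrix (Fin d₁) (Fin d₂) ℝ) : ℝ :=
  ‖LinearMap.toContinuousLinearMap (Matrix.toEuclideanLin A)‖

noncomputable def tinner {d : ℕ} (A B : Matrix (Fin d) (Fin d) ℝ) : ℝ :=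
  (A * Bᵀ).trace

noncomputable def sigmaMin {d₁ d₂ : ℕ} (A : Matrix (Fin d₁) (Fin d₂) ℝ) : ℝ :=
  sInf {s : ℝ | 0 < s ∧ ∃ i, s ^ 2 = (Matrix.isHermitian_conjTranspose_mul_self A).eigenvalues i}

noncomputable def projPerp {d : ℕ} (w : Fin d → ℝ) (Z : Matrix (Fin d) (Fin d) ℝ) :
    Matrix (Fin d) (Fin d) ℝ :=
  Z - tinner (Matrix.vecMulVec w w) Z • Matrix.vecMulVec w w

variable {d : ℕ}

lemma tinner_eq_sum (A B : Matrix (Fin d) (Fin d) ℝ) :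
    tinner A B = ∑ i, ∑ j, A i j * B i j := by
  simp [tinner, Matrix.trace, Matrix.mul_apply, Matrix.diag]

lemma tinner_comm (A B : Matrix (Fin d) (Fin d) ℝ) : tinner A B = tinner B A := by
  simp [tinner_eq_sum, mul_comm]

lemma tinner_add_right (A B C : Matrix (Fin d) (Fin d) ℝ) :
    tinner A (B + C) = tinner A B + tinner A C := by
  simp [tinner_eq_sum, mul_add, Finset.sum_add_distrib]

lemma tinner_sub_right (A B C : Matrix (Fin d) (Fin d) ℝ) :
    tinner A (B - C) = tinner A B - tinner A C := by
  simp [tinner_eq_sum, mul_sub, Finset.sum_sub_distrib]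

lemma tinner_smul_right (A B : Matrix (Fin d) (Fin d) ℝ) (c : ℝ) :
    tinner A (c • B) = c * tinner A B := by
  simp [tinner_eq_sum, Finset.mul_sum]
  apply Finset.sum_congr rfl; intros; apply Finset.sum_congr rfl; intros; ring

lemma tinner_smul_left (A B : Matrix (Fin d) (Fin d) ℝ) (c : ℝ) :
    tinner (c • A) B = c * tinner A B := by
  rw [tinner_comm, tinner_smul_right, tinner_comm]

lemma tinner_sum_right {ι : Type*} (s : Finset ι) (A : Matrix (Fin d) (Fin d) ℝ)
    (f : ι → Matrix (Fin d) (Fin d) ℝ) :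
    tinner A (∑ i ∈ s, f i) = ∑ i ∈ s, tinner A (f i) := by
  classical
  induction s using Finset.induction with
  | empty => simp [tinner_eq_sum]
  | insert _ _ h ih => rw [Finset.sum_insert h, tinner_add_right, ih, Finset.sum_insert h]

lemma frobNorm_nonneg (A : Matrix (Fin d) (Fin d) ℝ) : 0 ≤ frobNorm A :=
  Real.sqrt_nonneg _

lemma frobNorm_sq (A : Matrix (Fin d) (Fin d) ℝ) :
    frobNorm A ^ 2 = ∑ i, ∑ j, A i j ^ 2 := by
  rw [frobNorm, Real.sq_sqrt]
  positivity

lemma tinner_self (A : Matrix (Fin d) (Fin d) ℝ) : tinner A A = frobNorm A ^ 2 := by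
  rw [frobNorm_sq, tinner_eq_sum]; simp [sq]

lemma tinner_vecMulVec (a b c e : Fin d → ℝ) :
    tinner (vecMulVec a b) (vecMulVec c e) = (∑ i, a i * c i) * (∑ j, b j * e j) := by
  rw [tinner_eq_sum, Finset.sum_mul_sum]
  simp [Matrix.vecMulVec_apply]; ring_nf
  apply Finset.sum_congr rfl; intros; apply Finset.sum_congr rfl; intros; ring

lemma tinner_abs_le (A B : Matrix (Fin d) (Fin d) ℝ) :
    |tinner A B| ≤ frobNorm A * frobNorm B := by
  have h : (tinner A B) ^ 2 ≤ (∑ i, ∑ j, A i j ^ 2) * (∑ i, ∑ j, B i j ^ 2) := by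
    rw [tinner_eq_sum]
    have h1 : (∑ i, ∑ j, A i j * B i j) = ∑ p ∈ Finset.univ ×ˢ Finset.univ,
        A p.1 p.2 * B p.1 p.2 := by rw [Finset.sum_product]
    have h2 : (∑ i, ∑ j, A i j ^ 2) = ∑ p ∈ Finset.univ ×ˢ Finset.univ, A p.1 p.2 ^ 2 := by
      rw [Finset.sum_product]
    have h3 : (∑ i, ∑ j, B i j ^ 2) = ∑ p ∈ Finset.univ ×ˢ Finset.univ, B p.1 p.2 ^ 2 := by
      rw [Finset.sum_product]
    rw [h1, h2, h3]
    exact Finset.sum_mul_sq_le_sq_mul_sq _ _ _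
  have := Real.sqrt_le_sqrt h
  rwa [Real.sqrt_sq_eq_abs, Real.sqrt_mul (show (0:ℝ) ≤ ∑ i, ∑ j, A i j ^ 2 by positivity), ← frobNorm, ← frobNorm] at this

lemma sqrt_le_helper {a b : ℝ} (hb : 0 ≤ b) (h : a ^ 2 ≤ b ^ 2) (ha : 0 ≤ a) : a ≤ b := by
  nlinarith

lemma frobNorm_triangle (A B : Matrix (Fin d) (Fin d) ℝ) :
    frobNorm (A + B) ≤ frobNorm A + frobNorm B := by
  apply sqrt_le_helper (add_nonneg (frobNorm_nonneg _) (frobNorm_nonneg _)) _ (frobNorm_nonneg _)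
  have h1 : frobNorm (A + B) ^ 2 = frobNorm A ^ 2 + 2 * tinner A B + frobNorm B ^ 2 := by
    rw [← tinner_self, ← tinner_self, ← tinner_self, tinner_add_right, tinner_comm (A+B) A,
      tinner_comm (A+B) B, tinner_add_right, tinner_add_right, tinner_comm B A]
    ring
  have h2 := tinner_abs_le A B
  nlinarith [frobNorm_nonneg A, frobNorm_nonneg B, abs_le.mp h2]

lemma frobNorm_neg (A : Matrix (Fin d) (Fin d) ℝ) : frobNorm (-A) = frobNorm A := by
  simp [frobNorm]

lemma frobNorm_eq_zero {A : Matrix (Fin d) (Fin d) ℝ} (h : frobNorm A = 0) : A = 0 := by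
  have h2 : (∑ i, ∑ j, A i j ^ 2) = 0 := by
    have := frobNorm_sq A
    rw [h] at this; simpa using this.symm
  ext i j
  have hi := (Finset.sum_eq_zero_iff_of_nonneg (fun i _ => by positivity)).mp h2 i (Finset.mem_univ i)
  have hj := (Finset.sum_eq_zero_iff_of_nonneg (fun j _ => by positivity)).mp hi j (Finset.mem_univ j)
  simpa using pow_eq_zero_iff (n := 2) (by norm_num) |>.mp hj
variable {d : ℕ}

lemma isSymm_toEuclidean_symmetric {A : Matrix (Fin d) (Fin d) ℝ} (hA : A.IsSymm) :
    (Matrix.toEuclideanLin A).IsSymmetric := by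
  rw [← Matrix.isHermitian_iff_isSymmetric]
  unfold Matrix.IsHermitian
  ext i j
  simp [Matrix.conjTranspose_apply]
  exact congrFun (congrFun hA i) j

lemma eigen_decomp (A : Matrix (Fin d) (Fin d) ℝ) (hA : A.IsSymm) :
    ∃ (v : Fin d → Fin d → ℝ) (μ : Fin d → ℝ),
      (∀ i j, (∑ a, v i a * v j a) = if i = j then 1 else 0) ∧
      A = ∑ i, μ i • Matrix.vecMulVec (v i) (v i) ∧
      (∀ i, |μ i| ≤ specNorm A) ∧
      (∀ K, 0 ≤ K → (∀ i, |μ i| ≤ K) → specNorm A ≤ K) ∧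
      (∀ x : Fin d → ℝ, ∑ i, (∑ a, v i a * x a) ^ 2 = ∑ a, x a ^ 2) ∧
      (Finset.univ.filter (fun i => μ i ≠ 0)).card ≤ A.rank := by
  classical
  have hT : (Matrix.toEuclideanLin A).IsSymmetric := isSymm_toEuclidean_symmetric hA
  set T := Matrix.toEuclideanLin A with hTdef
  have hd : Module.finrank ℝ (EuclideanSpace ℝ (Fin d)) = d := finrank_euclideanSpace_fin
  set b := hT.eigenvectorBasis hd with hbdef
  set μ := hT.eigenvalues hd with hμdef
  have hTb : ∀ i, T (b i) = μ i • b i := fun i => hT.apply_eigenvectorBasis hd i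
  -- inner products of basis vectors as plain sums
  have hinner : ∀ (x y : EuclideanSpace ℝ (Fin d)), (inner ℝ x y : ℝ) = ∑ a, x a * y a := by
    intro x y
    rw [PiLp.inner_apply]
    simp [RCLike.inner_apply, mul_comm]
  have horth : ∀ i j, (∑ a, b i a * b j a) = if i = j then 1 else 0 := by
    intro i j
    rw [← hinner]
    exact orthonormal_iff_ite.mp b.orthonormal i j
  refine ⟨fun i a => b i a, μ, horth, ?_, ?_, ?_, ?_, ?_⟩
  · -- decomposition
    ext a c
    set x : EuclideanSpace ℝ (Fin d) := (WithLp.equiv 2 (Fin d → ℝ)).symm (Pi.single c 1) with hx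
    have h1 : T x = (WithLp.equiv 2 (Fin d → ℝ)).symm (A *ᵥ Pi.single c 1) :=
      Matrix.toEuclideanLin_apply_piLp_toLp A _
    have h2 : T x = ∑ i, (μ i * (inner ℝ (b i) x : ℝ)) • b i := by
      conv_lhs => rw [← b.sum_repr' x]
      rw [map_sum]
      apply Finset.sum_congr rfl
      intro i _
      rw [T.map_smul, hTb i, smul_smul]
      congr 1
      ring
    have h3 : (T x) a = A a c := by
      rw [h1]
      show (A *ᵥ Pi.single c 1) a = A a c
      simp [Matrix.mulVec, dotProduct, Pi.single_apply]
    have h4 : (T x) a = ∑ i, (μ i * (inner ℝ (b i) x : ℝ)) * b i a := by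
      rw [h2, WithLp.ofLp_sum]
      exact Finset.sum_apply a Finset.univ _
    have hxe : ∀ e, x e = if e = c then (1:ℝ) else 0 := by
      intro e
      rw [hx]
      show (Pi.single c (1:ℝ) : Fin d → ℝ) e = _
      simp [Pi.single_apply]
    have h5 : ∀ i, (inner ℝ (b i) x : ℝ) = b i c := by
      intro i
      rw [hinner]
      simp [hxe]
    simp only [h5] at h4
    rw [← h3, h4]
    simp only [Matrix.sum_apply, Matrix.smul_apply, Matrix.vecMulVec_apply, smul_eq_mul]
    apply Finset.sum_congr rfl
    intros
    ring
  · -- lower bound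
    intro i
    have hb1 : ‖b i‖ = 1 := b.orthonormal.1 i
    have h1 : ‖T (b i)‖ = |μ i| := by
      rw [hTb i, norm_smul, hb1, Real.norm_eq_abs, mul_one]
    have h2 : ‖T (b i)‖ ≤ specNorm A * ‖b i‖ :=
      (LinearMap.toContinuousLinearMap T).le_opNorm (b i)
    rw [h1, hb1, mul_one] at h2
    exact h2
  · -- upper bound
    intro K hK0 hK
    apply ContinuousLinearMap.opNorm_le_bound _ hK0
    intro x
    have hTx : ∀ i, b.repr (T x) i = μ i * b.repr x i := fun i =>
      hT.eigenvectorBasis_apply_self_apply hd x i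
    have h1 : ‖T x‖ = Real.sqrt (∑ i, (μ i * b.repr x i) ^ 2) := by
      rw [← b.repr.norm_map (T x), EuclideanSpace.norm_eq]
      congr 1
      apply Finset.sum_congr rfl
      intro i _
      rw [hTx i, Real.norm_eq_abs, sq_abs]
    have h2 : ‖x‖ = Real.sqrt (∑ i, (b.repr x i) ^ 2) := by
      rw [← b.repr.norm_map x, EuclideanSpace.norm_eq]
      congr 1
      apply Finset.sum_congr rfl
      intro i _
      rw [Real.norm_eq_abs, sq_abs]
    show ‖T x‖ ≤ K * ‖x‖
    rw [h1, h2, ← Real.sqrt_sq hK0, ← Real.sqrt_mul (by positivity)]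
    apply Real.sqrt_le_sqrt
    rw [Finset.mul_sum]
    apply Finset.sum_le_sum
    intro i _
    have h6 : (μ i) ^ 2 ≤ K ^ 2 := by
      rw [← sq_abs]
      exact pow_le_pow_left₀ (abs_nonneg _) (hK i) 2
    nlinarith [sq_nonneg (b.repr x i), h6]
  · -- Parseval
    intro x
    set x' : EuclideanSpace ℝ (Fin d) := (WithLp.equiv 2 (Fin d → ℝ)).symm x with hx'
    have h1 : ‖x'‖ = Real.sqrt (∑ a, x a ^ 2) := by
      rw [EuclideanSpace.norm_eq]
      congr 1
      apply Finset.sum_congr rfl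
      intro a _
      rw [Real.norm_eq_abs, sq_abs]
      rfl
    have h2 : ‖b.repr x'‖ = Real.sqrt (∑ i, (∑ a, b i a * x a) ^ 2) := by
      rw [EuclideanSpace.norm_eq]
      congr 1
      apply Finset.sum_congr rfl
      intro i _
      rw [Real.norm_eq_abs, sq_abs, b.repr_apply_apply, hinner]
      rfl
    have h3 := b.repr.norm_map x'
    rw [h1, h2] at h3
    have h4 := congrArg (· ^ 2) h3
    simp only at h4
    rw [Real.sq_sqrt (by positivity), Real.sq_sqrt (by positivity)] at h4
    exact h4
  · -- card ≤ rank
    have hrank : A.rank = Module.finrank ℝ (LinearMap.range T) := by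
      rw [hTdef, Matrix.toEuclideanLin_eq_toLin_orthonormal]
      exact A.rank_eq_finrank_range_toLin _ _
    set S := Finset.univ.filter (fun i => μ i ≠ 0) with hS
    have hmem : ∀ i : S, b i ∈ LinearMap.range T := by
      rintro ⟨i, hi⟩
      have hμi : μ i ≠ 0 := by simpa [hS, Finset.mem_filter] using hi
      exact ⟨(μ i)⁻¹ • b i, by rw [T.map_smul, hTb i, smul_smul, inv_mul_cancel₀ hμi, one_smul]⟩
    have h1 : Orthonormal ℝ (fun i : S => b i) :=
      b.orthonormal.comp _ Subtype.coe_injective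
    have hli : LinearIndependent ℝ (fun i : S => (⟨b i, hmem i⟩ : LinearMap.range T)) :=
      h1.linearIndependent.of_comp (LinearMap.range T).subtype
    have h2 := hli.fintype_card_le_finrank
    rw [Fintype.card_coe] at h2
    rw [hrank]
    exact h2

lemma rank_smul_le (c : ℝ) (A : Matrix (Fin d) (Fin d) ℝ) : (c • A).rank ≤ A.rank := by
  have h : c • A = (c • (1 : Matrix (Fin d) (Fin d) ℝ)) * A := by
    rw [Matrix.smul_mul, Matrix.one_mul]
  rw [h]
  exact Matrix.rank_mul_le_right _ _

lemma matrank_add_le (A B : Matrix (Fin d) (Fin d) ℝ) : (A + B).rank ≤ A.rank + B.rank := by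
  rw [Matrix.rank, Matrix.rank, Matrix.rank]
  have h : (A + B).mulVecLin = A.mulVecLin + B.mulVecLin := by
    ext x : 1
    simp [Matrix.add_mulVec]
  rw [h]
  have hle : LinearMap.range (A.mulVecLin + B.mulVecLin) ≤
      LinearMap.range A.mulVecLin ⊔ LinearMap.range B.mulVecLin := by
    rintro _ ⟨x, rfl⟩
    exact Submodule.mem_sup.2 ⟨_, ⟨x, rfl⟩, _, ⟨x, rfl⟩, rfl⟩
  exact (Submodule.finrank_mono hle).trans
    (Submodule.finrank_add_le_finrank_add_finrank _ _)

lemma rank_vecMulVec_le (u v : Fin d → ℝ) : (Matrix.vecMulVec u v).rank ≤ 1 := by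
  rw [Matrix.vecMulVec_eq (Fin 1)]
  exact le_trans (Matrix.rank_mul_le_left _ _)
    (le_trans (Matrix.rank_le_card_width _) (by simp))

lemma rank_sum_le {ι : Type*} (s : Finset ι) (f : ι → Matrix (Fin d) (Fin d) ℝ) :
    (∑ i ∈ s, f i).rank ≤ ∑ i ∈ s, (f i).rank := by
  classical
  induction s using Finset.induction with
  | empty => simp [Matrix.rank_zero]
  | insert _ _ h ih =>
    rw [Finset.sum_insert h, Finset.sum_insert h]
    exact le_trans (matrank_add_le _ _) (by omega)

lemma isSymm_vecMulVec (v : Fin d → ℝ) : (Matrix.vecMulVec v v).IsSymm := by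
  ext i j
  simp [Matrix.transpose_apply, Matrix.vecMulVec_apply, mul_comm]

lemma isSymm_sum {ι : Type*} (s : Finset ι) (f : ι → Matrix (Fin d) (Fin d) ℝ)
    (h : ∀ i ∈ s, (f i).IsSymm) : (∑ i ∈ s, f i).IsSymm := by
  unfold Matrix.IsSymm
  rw [Matrix.transpose_sum]
  exact Finset.sum_congr rfl fun i hi => h i hi

lemma isSymm_smul (c : ℝ) (A : Matrix (Fin d) (Fin d) ℝ) (h : A.IsSymm) : (c • A).IsSymm := by
  unfold Matrix.IsSymm at *
  rw [Matrix.transpose_smul, h]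

lemma frob_sq_partial (v : Fin d → Fin d → ℝ) (μ : Fin d → ℝ)
    (horth : ∀ i j, (∑ a, v i a * v j a) = if i = j then 1 else 0) (S : Finset (Fin d)) :
    frobNorm (∑ i ∈ S, μ i • Matrix.vecMulVec (v i) (v i)) ^ 2 = ∑ i ∈ S, μ i ^ 2 := by
  classical
  rw [← tinner_self, tinner_sum_right]
  apply Finset.sum_congr rfl
  intro i hi
  rw [tinner_smul_right, tinner_comm, tinner_sum_right]
  have h : ∀ j ∈ S, tinner (Matrix.vecMulVec (v i) (v i)) (μ j • Matrix.vecMulVec (v j) (v j))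
      = if i = j then μ j else 0 := by
    intro j _
    rw [tinner_smul_right, tinner_vecMulVec, horth i j]
    split <;> simp
  rw [Finset.sum_congr rfl h, Finset.sum_ite_eq S i (fun j => μ j)]
  simp [hi]
  ring

lemma split_matrix (k : ℕ) (G : Matrix (Fin d) (Fin d) ℝ) (hGs : G.IsSymm)
    (hGr : G.rank ≤ 2 * k) :
    ∃ G₁ G₂ : Matrix (Fin d) (Fin d) ℝ, G = G₁ + G₂ ∧ G₁.IsSymm ∧ G₂.IsSymm ∧
      G₁.rank ≤ k ∧ G₂.rank ≤ k ∧ frobNorm G₁ ≤ frobNorm G ∧ frobNorm G₂ ≤ frobNorm G := by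
  classical
  obtain ⟨v, μ, horth, hdec, _, _, _, hcard⟩ := eigen_decomp G hGs
  set supp := Finset.univ.filter (fun i => μ i ≠ 0) with hsuppdef
  have hsupp : supp.card ≤ 2 * k := hcard.trans hGr
  obtain ⟨S, hSsub, hScard⟩ := Finset.exists_subset_card_eq (min_le_right k supp.card)
  refine ⟨∑ i ∈ S, μ i • Matrix.vecMulVec (v i) (v i),
    ∑ i ∈ Finset.univ \ S, μ i • Matrix.vecMulVec (v i) (v i), ?_, ?_, ?_, ?_, ?_, ?_, ?_⟩
  · rw [add_comm, Finset.sum_sdiff (Finset.subset_univ S)]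
    exact hdec
  · exact isSymm_sum _ _ fun i _ => isSymm_smul _ _ (isSymm_vecMulVec _)
  · exact isSymm_sum _ _ fun i _ => isSymm_smul _ _ (isSymm_vecMulVec _)
  · refine le_trans (rank_sum_le _ _) ?_
    have h1 : ∀ i ∈ S, (μ i • Matrix.vecMulVec (v i) (v i)).rank ≤ 1 := fun i _ =>
      le_trans (rank_smul_le _ _) (_root_.rank_vecMulVec_le _ _)
    refine le_trans (Finset.sum_le_sum h1) ?_
    simp only [Finset.sum_const, smul_eq_mul, mul_one, hScard]
    exact min_le_left _ _
  · have hzero : ∀ i ∈ Finset.univ \ S, i ∉ (Finset.univ \ S).filter (fun i => μ i ≠ 0) →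
        μ i • Matrix.vecMulVec (v i) (v i) = 0 := by
      intro i hi hni
      have : μ i = 0 := by
        by_contra hc
        exact hni (Finset.mem_filter.2 ⟨hi, hc⟩)
      rw [this, zero_smul]
    rw [← Finset.sum_subset (Finset.filter_subset _ _) hzero]
    refine le_trans (rank_sum_le _ _) ?_
    have h1 : ∀ i ∈ (Finset.univ \ S).filter (fun i => μ i ≠ 0),
        (μ i • Matrix.vecMulVec (v i) (v i)).rank ≤ 1 := fun i _ =>
      le_trans (rank_smul_le _ _) (_root_.rank_vecMulVec_le _ _)
    refine le_trans (Finset.sum_le_sum h1) ?_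
    have heq : (Finset.univ \ S).filter (fun i => μ i ≠ 0) = supp \ S := by
      ext i
      simp [hsuppdef, Finset.mem_sdiff, Finset.mem_filter, and_comm]
    rw [heq]
    simp only [Finset.sum_const, smul_eq_mul, mul_one]
    rw [Finset.card_sdiff_of_subset hSsub]
    omega
  · apply sqrt_le_helper (frobNorm_nonneg _) _ (frobNorm_nonneg _)
    rw [frob_sq_partial v μ horth S, hdec]
    have : frobNorm (∑ i, μ i • Matrix.vecMulVec (v i) (v i)) ^ 2 = ∑ i, μ i ^ 2 :=
      frob_sq_partial v μ horth Finset.univ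
    rw [this]
    exact Finset.sum_le_sum_of_subset_of_nonneg (Finset.subset_univ S)
      (fun i _ _ => sq_nonneg _)
  · apply sqrt_le_helper (frobNorm_nonneg _) _ (frobNorm_nonneg _)
    rw [frob_sq_partial v μ horth _, hdec]
    have : frobNorm (∑ i, μ i • Matrix.vecMulVec (v i) (v i)) ^ 2 = ∑ i, μ i ^ 2 :=
      frob_sq_partial v μ horth Finset.univ
    rw [this]
    exact Finset.sum_le_sum_of_subset_of_nonneg (Finset.subset_univ _)
      (fun i _ _ => sq_nonneg _)

lemma isSymm_add {A B : Matrix (Fin d) (Fin d) ℝ} (hA : A.IsSymm) (hB : B.IsSymm) :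
    (A + B).IsSymm := by
  unfold Matrix.IsSymm at *
  rw [Matrix.transpose_add, hA, hB]

lemma isSymm_sub {A B : Matrix (Fin d) (Fin d) ℝ} (hA : A.IsSymm) (hB : B.IsSymm) :
    (A - B).IsSymm := by
  unfold Matrix.IsSymm at *
  rw [Matrix.transpose_sub, hA, hB]

lemma tinner_add_left (A B C : Matrix (Fin d) (Fin d) ℝ) :
    tinner (A + B) C = tinner A C + tinner B C := by
  rw [tinner_comm, tinner_add_right, tinner_comm C A, tinner_comm C B]

lemma tinner_sub_left (A B C : Matrix (Fin d) (Fin d) ℝ) :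
    tinner (A - B) C = tinner A C - tinner B C := by
  rw [tinner_comm, tinner_sub_right, tinner_comm C A, tinner_comm C B]

lemma specNorm_nonneg (A : Matrix (Fin d) (Fin d) ℝ) : 0 ≤ specNorm A := norm_nonneg _

lemma tinner_WW (w : Fin d → ℝ) (hw : ∑ a, w a ^ 2 = 1) :
    tinner (vecMulVec w w) (vecMulVec w w) = 1 := by
  rw [tinner_vecMulVec]
  have h : (∑ a, w a * w a) = 1 := by rw [← hw]; exact Finset.sum_congr rfl fun a _ => (sq (w a)).symm
  rw [h, one_mul]

lemma frob_projPerp_le (w : Fin d → ℝ) (hw : ∑ a, w a ^ 2 = 1)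
    (Z : Matrix (Fin d) (Fin d) ℝ) : frobNorm (projPerp w Z) ≤ frobNorm Z := by
  apply sqrt_le_helper (frobNorm_nonneg _) _ (frobNorm_nonneg _)
  set c := tinner (Matrix.vecMulVec w w) Z with hc
  have h1 : frobNorm (projPerp w Z) ^ 2 = frobNorm Z ^ 2 - c ^ 2 := by
    rw [← tinner_self, ← tinner_self, projPerp, tinner_sub_right, tinner_sub_left,
      tinner_sub_left, tinner_smul_right, tinner_smul_right, tinner_smul_left,
      tinner_smul_left, tinner_WW w hw, tinner_comm Z (vecMulVec w w), ← hc]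
    ring
  rw [h1]
  nlinarith [sq_nonneg c]

lemma rank_projPerp_le (w : Fin d → ℝ) (Z : Matrix (Fin d) (Fin d) ℝ) :
    (projPerp w Z).rank ≤ Z.rank + 1 := by
  rw [projPerp, sub_eq_add_neg, ← neg_smul]
  exact le_trans (matrank_add_le _ _)
    (by
      have := le_trans (rank_smul_le (-(tinner (vecMulVec w w) Z)) (vecMulVec w w))
        (_root_.rank_vecMulVec_le w w)
      omega)

lemma isSymm_projPerp (w : Fin d → ℝ) {Z : Matrix (Fin d) (Fin d) ℝ} (hZ : Z.IsSymm) :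
    (projPerp w Z).IsSymm :=
  isSymm_sub hZ (isSymm_smul _ _ (isSymm_vecMulVec w))

lemma tinner_quadform_le (w : Fin d → ℝ) (hw : ∑ a, w a ^ 2 = 1)
    (Z : Matrix (Fin d) (Fin d) ℝ) : |tinner (Matrix.vecMulVec w w) Z| ≤ specNorm Z := by
  set w' : EuclideanSpace ℝ (Fin d) := (WithLp.equiv 2 (Fin d → ℝ)).symm w with hw'
  have hTw : Matrix.toEuclideanLin Z w' = (WithLp.equiv 2 (Fin d → ℝ)).symm (Z *ᵥ w) :=
    Matrix.toEuclideanLin_apply_piLp_toLp Z w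
  have h1 : tinner (Matrix.vecMulVec w w) Z = (inner ℝ w' (Matrix.toEuclideanLin Z w') : ℝ) := by
    rw [hTw, PiLp.inner_apply]
    simp only [RCLike.inner_apply, conj_trivial]
    have h2 : ∀ a, w' a = w a := fun a => rfl
    have h3 : ∀ a, ((WithLp.equiv 2 (Fin d → ℝ)).symm (Z *ᵥ w)) a = (Z *ᵥ w) a := fun a => rfl
    simp only [h2, h3]
    rw [tinner_eq_sum]
    simp only [Matrix.vecMulVec_apply, Matrix.mulVec, dotProduct]
    apply Finset.sum_congr rfl
    intro j _
    rw [Finset.sum_mul]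
    apply Finset.sum_congr rfl
    intro i _
    ring
  have h2 := abs_real_inner_le_norm w' (Matrix.toEuclideanLin Z w')
  have h3 : ‖Matrix.toEuclideanLin Z w'‖ ≤ specNorm Z * ‖w'‖ :=
    (LinearMap.toContinuousLinearMap (Matrix.toEuclideanLin Z)).le_opNorm w'
  have h4 : ‖w'‖ = 1 := by
    rw [EuclideanSpace.norm_eq]
    have h5 : ∀ a, ‖w' a‖ ^ 2 = w a ^ 2 := fun a => by
      rw [Real.norm_eq_abs, sq_abs]; rfl
    rw [Finset.sum_congr rfl fun a _ => h5 a, hw, Real.sqrt_one]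
  rw [h1]
  rw [h4] at h2 h3
  rw [one_mul] at h2
  rw [mul_one] at h3
  exact h2.trans h3

lemma frob_le_sqrt_rank_spec (A : Matrix (Fin d) (Fin d) ℝ) (hA : A.IsSymm) (k : ℕ)
    (hr : A.rank ≤ k) : frobNorm A ≤ Real.sqrt k * specNorm A := by
  obtain ⟨v, μ, horth, hdec, hlow, _, _, hcard⟩ := eigen_decomp A hA
  apply sqrt_le_helper (mul_nonneg (Real.sqrt_nonneg _) (specNorm_nonneg _)) _ (frobNorm_nonneg _)
  have h1 : frobNorm A ^ 2 = ∑ i, μ i ^ 2 := by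
    conv_lhs => rw [hdec]
    exact frob_sq_partial v μ horth Finset.univ
  have h2 : (∑ i, μ i ^ 2) ≤ (k : ℝ) * specNorm A ^ 2 := by
    have e1 : (∑ i, μ i ^ 2) = ∑ i ∈ Finset.univ.filter (fun i => μ i ≠ 0), μ i ^ 2 := by
      rw [Finset.sum_filter_of_ne]
      intro i _ h
      intro hμ
      exact h (by rw [hμ]; ring)
    rw [e1]
    have e2 : ∀ i ∈ Finset.univ.filter (fun i => μ i ≠ 0), μ i ^ 2 ≤ specNorm A ^ 2 := by
      intro i _
      have := hlow i
      nlinarith [abs_nonneg (μ i), sq_abs (μ i)]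
    refine le_trans (Finset.sum_le_card_nsmul _ _ _ e2) ?_
    rw [nsmul_eq_mul]
    have : ((Finset.univ.filter (fun i => μ i ≠ 0)).card : ℝ) ≤ (k : ℝ) := by
      exact_mod_cast hcard.trans hr
    nlinarith [sq_nonneg (specNorm A)]
  rw [mul_pow, Real.sq_sqrt (by positivity : (0:ℝ) ≤ (k:ℝ))]
  rw [h1]
  exact h2

lemma net_bound {M : Matrix (Fin d) (Fin d) ℝ} (hM : M.IsSymm)
    (Net : Finset (Fin d → ℝ)) (hne : Net.Nonempty)
    (hunit : ∀ w ∈ Net, ∑ i, w i ^ 2 = 1)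
    (hnet : ∀ x : Fin d → ℝ, ∑ i, x i ^ 2 = 1 → ∃ w ∈ Net, vecNorm (x - w) ≤ 1 / 2)
    (K : ℝ) (hK0 : 0 ≤ K)
    (h : ∀ w ∈ Net, |tinner (Matrix.vecMulVec w w) M| ≤ K) :
    specNorm M ≤ 2 * K := by
  classical
  obtain ⟨v, μ, horth, hdec, hlow, hup, hpar, _⟩ := eigen_decomp M hM
  by_cases hall : ∀ i, μ i = 0
  · have := hup 0 le_rfl (fun i => by simp [hall i])
    linarith
  · push_neg at hall
    obtain ⟨i₁, hi₁⟩ := hall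
    obtain ⟨i₀, _, hmax⟩ := Finset.exists_max_image Finset.univ (fun i => |μ i|)
      ⟨i₁, Finset.mem_univ i₁⟩
    have hmax' : ∀ i, |μ i| ≤ |μ i₀| := fun i => hmax i (Finset.mem_univ i)
    have hv0 : ∑ a, v i₀ a ^ 2 = 1 := by
      have h0 := horth i₀ i₀
      simp at h0
      rw [← h0]
      exact Finset.sum_congr rfl fun a _ => sq (v i₀ a)
    obtain ⟨w, hwN, hw12⟩ := hnet (v i₀) hv0
    set α := ∑ a, v i₀ a * w a with hα
    have hwu : ∑ a, w a ^ 2 = 1 := hunit w hwN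
    have hsub : ∑ a, (v i₀ a - w a) ^ 2 = 2 - 2 * α := by
      have e : ∀ a, (v i₀ a - w a) ^ 2
          = v i₀ a ^ 2 - 2 * (v i₀ a * w a) + w a ^ 2 := fun a => by ring
      rw [Finset.sum_congr rfl fun a _ => e a, Finset.sum_add_distrib,
        Finset.sum_sub_distrib, ← Finset.mul_sum, hv0, hwu, ← hα]
      ring
    have hquarter : 2 - 2 * α ≤ 1 / 4 := by
      have h1 : vecNorm (v i₀ - w) ^ 2 ≤ (1 / 2) ^ 2 :=
        pow_le_pow_left₀ (Real.sqrt_nonneg _) hw12 2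
      rw [vecNorm, Real.sq_sqrt (by positivity)] at h1
      have h2 : ∑ a, (v i₀ - w) a ^ 2 = ∑ a, (v i₀ a - w a) ^ 2 :=
        Finset.sum_congr rfl fun a _ => by rw [Pi.sub_apply]
      rw [h2, hsub] at h1
      nlinarith
    have hα78 : 7 / 8 ≤ α := by linarith
    set c : Fin d → ℝ := fun i => ∑ a, v i a * w a with hc
    have hparw : ∑ i, c i ^ 2 = 1 := by rw [hpar w]; exact hwu
    have hq : tinner (Matrix.vecMulVec w w) M = ∑ i, μ i * c i ^ 2 := by
      conv_lhs => rw [hdec]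
      rw [tinner_sum_right]
      apply Finset.sum_congr rfl
      intro i _
      rw [tinner_smul_right, tinner_vecMulVec]
      have e : (∑ a, w a * v i a) = c i := Finset.sum_congr rfl fun a _ => mul_comm _ _
      rw [e]
      ring
    have hsplit : tinner (Matrix.vecMulVec w w) M
        = μ i₀ * α ^ 2 + ∑ i ∈ Finset.univ.erase i₀, μ i * c i ^ 2 := by
      rw [hq, ← Finset.add_sum_erase _ _ (Finset.mem_univ i₀)]
    have hee : ∑ i ∈ Finset.univ.erase i₀, c i ^ 2 = 1 - α ^ 2 := by
      have h0 := Finset.add_sum_erase Finset.univ (fun i => c i ^ 2) (Finset.mem_univ i₀)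
      rw [hparw] at h0
      have h1 : c i₀ ^ 2 + ∑ i ∈ Finset.univ.erase i₀, c i ^ 2 = 1 := by
        have hci0 : c i₀ = α := rfl
        simpa using h0
      have hci0 : c i₀ = α := rfl
      rw [hci0] at h1
      linarith
    have hrest : |∑ i ∈ Finset.univ.erase i₀, μ i * c i ^ 2| ≤ |μ i₀| * (1 - α ^ 2) := by
      refine le_trans (Finset.abs_sum_le_sum_abs _ _) ?_
      have h1 : ∀ i ∈ Finset.univ.erase i₀, |μ i * c i ^ 2| ≤ |μ i₀| * c i ^ 2 := by
        intro i _
        rw [abs_mul, abs_pow, sq_abs]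
        exact mul_le_mul_of_nonneg_right (hmax' i) (sq_nonneg _)
      refine le_trans (Finset.sum_le_sum h1) ?_
      rw [← Finset.mul_sum, hee]
    have hKw := h w hwN
    have hlow2 : |μ i₀| * (2 * α ^ 2 - 1) ≤ |tinner (Matrix.vecMulVec w w) M| := by
      have hAeq : μ i₀ * α ^ 2
          = tinner (Matrix.vecMulVec w w) M - ∑ i ∈ Finset.univ.erase i₀, μ i * c i ^ 2 := by
        rw [hsplit]; ring
      have habs : |μ i₀ * α ^ 2|
          ≤ |tinner (Matrix.vecMulVec w w) M| + |∑ i ∈ Finset.univ.erase i₀, μ i * c i ^ 2| := by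
        rw [hAeq, sub_eq_add_neg]
        exact (abs_add_le _ _).trans (by rw [abs_neg])
      rw [abs_mul, abs_pow, sq_abs] at habs
      nlinarith [abs_nonneg (μ i₀), hrest, habs]
    have h2a : 1 / 2 ≤ 2 * α ^ 2 - 1 := by nlinarith
    have hfin : |μ i₀| ≤ 2 * K := by
      nlinarith [abs_nonneg (μ i₀), hlow2, hKw, h2a]
    exact hup (2 * K) (by linarith) fun i => (hmax' i).trans hfin

lemma sum_sq_expand {m : ℕ} (x y : Fin m → ℝ) (a b : ℝ) :
    ∑ i, (b * x i + a * y i) ^ 2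
      = b ^ 2 * ∑ i, x i ^ 2 + 2 * a * b * ∑ i, x i * y i + a ^ 2 * ∑ i, y i ^ 2 := by
  have e : ∀ i, (b * x i + a * y i) ^ 2
      = b ^ 2 * x i ^ 2 + 2 * a * b * (x i * y i) + a ^ 2 * y i ^ 2 := fun i => by ring
  rw [Finset.sum_congr rfl fun i _ => e i, Finset.sum_add_distrib, Finset.sum_add_distrib,
    ← Finset.mul_sum, ← Finset.mul_sum, ← Finset.mul_sum]

lemma tinner_expand (X Y : Matrix (Fin d) (Fin d) ℝ) (a b : ℝ) :
    tinner (b • X + a • Y) (b • X + a • Y)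
      = b ^ 2 * tinner X X + 2 * a * b * tinner X Y + a ^ 2 * tinner Y Y := by
  rw [tinner_add_right, tinner_add_left, tinner_add_left, tinner_smul_left, tinner_smul_left,
    tinner_smul_left, tinner_smul_left, tinner_smul_right, tinner_smul_right,
    tinner_smul_right, tinner_smul_right, tinner_comm Y X]
  ring

lemma cross_bound {m r : ℕ} (δ : ℝ)
    (𝒜 : Matrix (Fin d) (Fin d) ℝ →ₗ[ℝ] (Fin m → ℝ))
    (hRIP : ∀ Z : Matrix (Fin d) (Fin d) ℝ, Z.IsSymm → Z.rank ≤ 2 * r + 2 →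
      (1 - δ) * frobNorm Z ^ 2 ≤ ∑ i, 𝒜 Z i ^ 2 ∧
        ∑ i, 𝒜 Z i ^ 2 ≤ (1 + δ) * frobNorm Z ^ 2)
    (X Y : Matrix (Fin d) (Fin d) ℝ) (hXs : X.IsSymm) (hYs : Y.IsSymm)
    (hr : X.rank + Y.rank ≤ 2 * r + 2) :
    |(∑ i, 𝒜 X i * 𝒜 Y i) - tinner X Y| ≤ δ * frobNorm X * frobNorm Y := by
  have hG : ∀ Z : Matrix (Fin d) (Fin d) ℝ, Z.IsSymm → Z.rank ≤ 2 * r + 2 →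
      |(∑ i, 𝒜 Z i ^ 2) - tinner Z Z| ≤ δ * tinner Z Z := by
    intro Z h1 h2
    obtain ⟨ha, hb⟩ := hRIP Z h1 h2
    rw [tinner_self, abs_le]
    constructor <;> nlinarith
  rcases eq_or_lt_of_le (frobNorm_nonneg X) with hX0 | hX0
  · have : X = 0 := frobNorm_eq_zero hX0.symm
    subst this
    simp [tinner_eq_sum, ← hX0]
  rcases eq_or_lt_of_le (frobNorm_nonneg Y) with hY0 | hY0
  · have : Y = 0 := frobNorm_eq_zero hY0.symm
    subst this
    simp [tinner_eq_sum, ← hY0]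
  set a := frobNorm X with hadef
  set b := frobNorm Y with hbdef
  -- plus and minus matrices
  set P := b • X + a • Y with hP
  set Q := b • X + (-a) • Y with hQ
  have hPs : P.IsSymm := isSymm_add (isSymm_smul _ _ hXs) (isSymm_smul _ _ hYs)
  have hQs : Q.IsSymm := isSymm_add (isSymm_smul _ _ hXs) (isSymm_smul _ _ hYs)
  have hPr : P.rank ≤ 2 * r + 2 := le_trans (matrank_add_le _ _)
    (le_trans (add_le_add (rank_smul_le _ _) (rank_smul_le _ _)) hr)
  have hQr : Q.rank ≤ 2 * r + 2 := le_trans (matrank_add_le _ _)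
    (le_trans (add_le_add (rank_smul_le _ _) (rank_smul_le _ _)) hr)
  have hAP : ∀ i, 𝒜 P i = b * 𝒜 X i + a * 𝒜 Y i := by
    intro i
    rw [hP, map_add, 𝒜.map_smul, 𝒜.map_smul]
    rfl
  have hAQ : ∀ i, 𝒜 Q i = b * 𝒜 X i + (-a) * 𝒜 Y i := by
    intro i
    rw [hQ, map_add, 𝒜.map_smul, 𝒜.map_smul]
    rfl
  have hsP : ∑ i, 𝒜 P i ^ 2
      = b ^ 2 * ∑ i, 𝒜 X i ^ 2 + 2 * a * b * ∑ i, 𝒜 X i * 𝒜 Y i + a ^ 2 * ∑ i, 𝒜 Y i ^ 2 := by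
    rw [Finset.sum_congr rfl fun i _ => by rw [hAP i]]
    exact sum_sq_expand _ _ _ _
  have hsQ : ∑ i, 𝒜 Q i ^ 2
      = b ^ 2 * ∑ i, 𝒜 X i ^ 2 + 2 * (-a) * b * ∑ i, 𝒜 X i * 𝒜 Y i
        + (-a) ^ 2 * ∑ i, 𝒜 Y i ^ 2 := by
    rw [Finset.sum_congr rfl fun i _ => by rw [hAQ i]]
    exact sum_sq_expand _ _ (-a) _
  have htP : tinner P P = b ^ 2 * tinner X X + 2 * a * b * tinner X Y + a ^ 2 * tinner Y Y :=
    tinner_expand X Y a b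
  have htQ : tinner Q Q
      = b ^ 2 * tinner X X + 2 * (-a) * b * tinner X Y + (-a) ^ 2 * tinner Y Y :=
    tinner_expand X Y (-a) b
  have hXX : tinner X X = a ^ 2 := tinner_self X
  have hYY : tinner Y Y = b ^ 2 := tinner_self Y
  have hGP := hG P hPs hPr
  have hGQ := hG Q hQs hQr
  have hPQsum : tinner P P + tinner Q Q = 4 * a ^ 2 * b ^ 2 := by
    rw [htP, htQ, hXX, hYY]; ring
  obtain ⟨hGP1, hGP2⟩ := abs_le.mp hGP
  obtain ⟨hGQ1, hGQ2⟩ := abs_le.mp hGQ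
  have hid : (∑ i, 𝒜 P i ^ 2 - tinner P P) - (∑ i, 𝒜 Q i ^ 2 - tinner Q Q)
      = 4 * a * b * ((∑ i, 𝒜 X i * 𝒜 Y i) - tinner X Y) := by
    rw [hsP, hsQ, htP, htQ]
    ring
  have hδt : δ * tinner P P + δ * tinner Q Q = 4 * δ * a ^ 2 * b ^ 2 := by
    rw [htP, htQ, hXX, hYY]; ring
  have hab := mul_pos hX0 hY0
  have hup2 : 4 * a * b * ((∑ i, 𝒜 X i * 𝒜 Y i) - tinner X Y) ≤ 4 * δ * a ^ 2 * b ^ 2 := by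
    linarith [hGP2, hGQ1, hid, hδt]
  have hlo2 : -(4 * δ * a ^ 2 * b ^ 2) ≤ 4 * a * b * ((∑ i, 𝒜 X i * 𝒜 Y i) - tinner X Y) := by
    linarith [hGP1, hGQ2, hid, hδt]
  rw [abs_le]
  constructor
  · nlinarith [hab, hlo2]
  · nlinarith [hab, hup2]

set_option maxHeartbeats 1000000 in
theorem statement12 {d m r : ℕ} (δ : ℝ) (hδ0 : 0 ≤ δ) (hδ1 : δ ≤ 1)
    (𝒜 : Matrix (Fin d) (Fin d) ℝ →ₗ[ℝ] (Fin m → ℝ))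
    (𝒜s : (Fin m → ℝ) →ₗ[ℝ] Matrix (Fin d) (Fin d) ℝ)
    (hsym : ∀ y, (𝒜s y).IsSymm)
    (hadj : ∀ (y : Fin m → ℝ) (Z : Matrix (Fin d) (Fin d) ℝ), Z.IsSymm →
      tinner (𝒜s y) Z = ∑ i, y i * 𝒜 Z i)
    (hRIP : ∀ Z : Matrix (Fin d) (Fin d) ℝ, Z.IsSymm → Z.rank ≤ 2 * r + 2 →
      (1 - δ) * frobNorm Z ^ 2 ≤ ∑ i, 𝒜 Z i ^ 2 ∧
        ∑ i, 𝒜 Z i ^ 2 ≤ (1 + δ) * frobNorm Z ^ 2)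
    (Net : Finset (Fin d → ℝ)) (hne : Net.Nonempty)
    (hunit : ∀ w ∈ Net, ∑ i, w i ^ 2 = 1)
    (hnet : ∀ x : Fin d → ℝ, ∑ i, x i ^ 2 = 1 → ∃ w ∈ Net, vecNorm (x - w) ≤ 1 / 2)
    (Δt : Matrix (Fin d) (Fin d) ℝ) (hΔts : Δt.IsSymm) (hΔtr : Δt.rank ≤ 2 * r)
    (Δw : (Fin d → ℝ) → Matrix (Fin d) (Fin d) ℝ)
    (hΔw : ∀ w ∈ Net, (Δw w).IsSymm ∧ (Δw w).rank ≤ 2 * r)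
    (hkey : ∀ w ∈ Net,
      |tinner (Matrix.vecMulVec w w) (𝒜s (𝒜 (projPerp w (Δw w))))|
        ≤ 4 * Real.sqrt ((d : ℝ) / m) * vecNorm (𝒜 (projPerp w (Δw w)))) :
    specNorm (𝒜s (𝒜 Δt) - Δt)
      ≤ (16 * Real.sqrt (2 * (r : ℝ) * d / m) + 2 * δ) * specNorm Δt
        + 4 * (δ + 4 * Real.sqrt ((d : ℝ) / m))
            * Net.sup' hne (fun w => frobNorm (Δt - Δw w)) := by
  classical
  have hMs : (𝒜s (𝒜 Δt) - Δt).IsSymm := isSymm_sub (hsym _) hΔts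
  set s := Net.sup' hne (fun w => frobNorm (Δt - Δw w)) with hs
  have hs0 : 0 ≤ s := by
    obtain ⟨w₀, hw₀⟩ := hne
    rw [hs]
    exact le_trans (frobNorm_nonneg (Δt - Δw w₀))
      (Finset.le_sup' (fun w => frobNorm (Δt - Δw w)) hw₀)
  set τ := Real.sqrt ((d : ℝ) / m) with hτ
  have hτ0 : 0 ≤ τ := Real.sqrt_nonneg _
  set specΔ := specNorm Δt with hspecΔ
  have hspec0 : 0 ≤ specΔ := specNorm_nonneg _
  have h2r0 : (0:ℝ) ≤ 2 * (r:ℝ) := by positivity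
  have hsqrt2r0 : 0 ≤ Real.sqrt (2 * (r:ℝ)) := Real.sqrt_nonneg _
  have hsqrt2 : Real.sqrt 2 ≤ 2 := by
    nlinarith [Real.sq_sqrt (show (0:ℝ) ≤ 2 by norm_num), Real.sqrt_nonneg 2]
  have hsqrt20 : 0 ≤ Real.sqrt 2 := Real.sqrt_nonneg 2
  have hfrobΔt : frobNorm Δt ≤ Real.sqrt (2 * (r:ℝ)) * specΔ := by
    have h1 := frob_le_sqrt_rank_spec Δt hΔts (2 * r) hΔtr
    have h2 : ((2 * r : ℕ) : ℝ) = 2 * (r:ℝ) := by push_cast; ring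
    rwa [h2] at h1
  set K := 4 * τ * (Real.sqrt 2 * (Real.sqrt (2 * (r:ℝ)) * specΔ + s)) + specΔ * δ + 2 * δ * s
    with hK
  have hK0 : 0 ≤ K := by
    have := mul_nonneg hsqrt2r0 hspec0
    positivity
  have hρτ : Real.sqrt (2 * (r:ℝ) * d / m) = Real.sqrt (2 * (r:ℝ)) * τ := by
    rw [hτ, ← Real.sqrt_mul h2r0]
    congr 1
    ring
  -- per-vector bound
  have hperW : ∀ w ∈ Net, |tinner (Matrix.vecMulVec w w) (𝒜s (𝒜 Δt) - Δt)| ≤ K := by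
    intro w hwN
    have hwu := hunit w hwN
    obtain ⟨hDs, hDr⟩ := hΔw w hwN
    have hkeyw := hkey w hwN
    have hfrobF : frobNorm (Δt - Δw w) ≤ s := Finset.le_sup' (fun w => frobNorm (Δt - Δw w)) hwN
    set W := Matrix.vecMulVec w w with hW
    have hWs : W.IsSymm := isSymm_vecMulVec w
    have hWr : W.rank ≤ 1 := _root_.rank_vecMulVec_le w w
    have hWW : tinner W W = 1 := tinner_WW w hwu
    have hfrobW : frobNorm W = 1 := by
      have h1 := tinner_self W
      rw [hWW] at h1
      nlinarith [frobNorm_nonneg W]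
    set D := Δw w with hD
    set P := projPerp w D with hPdef
    set F := Δt - D with hF
    have hFs : F.IsSymm := isSymm_sub hΔts hDs
    set G := projPerp w F with hG
    have hPW : projPerp w D = D - tinner W D • W := rfl
    have hGW : projPerp w F = F - tinner W F • W := rfl
    -- decomposition of Δt
    have hcW : tinner W Δt = tinner W D + tinner W F := by
      rw [hF, tinner_sub_right]; ring
    have hdecomp : Δt = P + G + tinner W Δt • W := by
      rw [hPdef, hG, hPW, hGW, hcW, add_smul, hF]
      abel
    -- q computation
    have hq1 : tinner W (𝒜s (𝒜 Δt) - Δt) = (∑ i, 𝒜 W i * 𝒜 Δt i) - tinner W Δt := by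
      rw [tinner_sub_right, tinner_comm W (𝒜s (𝒜 Δt)), hadj (𝒜 Δt) W hWs]
      congr 1
      exact Finset.sum_congr rfl fun i _ => mul_comm _ _
    have hsplitq : (∑ i, 𝒜 W i * 𝒜 Δt i) - tinner W Δt
        = ((∑ i, 𝒜 W i * 𝒜 P i) - tinner W P)
          + ((∑ i, 𝒜 W i * 𝒜 G i) - tinner W G)
          + tinner W Δt * ((∑ i, 𝒜 W i * 𝒜 W i) - tinner W W) := by
      have e1 : ∀ i, 𝒜 Δt i = 𝒜 P i + 𝒜 G i + tinner W Δt * 𝒜 W i := by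
        intro i
        conv_lhs => rw [hdecomp]
        rw [map_add, map_add, 𝒜.map_smul]
        rfl
      have e2 : tinner W Δt = tinner W P + tinner W G + tinner W Δt * tinner W W := by
        conv_lhs => rw [hdecomp]
        rw [tinner_add_right, tinner_add_right, tinner_smul_right]
      have e4 : ∀ i, 𝒜 W i * 𝒜 Δt i
          = 𝒜 W i * 𝒜 P i + 𝒜 W i * 𝒜 G i + tinner W Δt * (𝒜 W i * 𝒜 W i) := by
        intro i
        rw [e1 i]
        ring
      have e3 : (∑ i, 𝒜 W i * 𝒜 Δt i)
          = (∑ i, 𝒜 W i * 𝒜 P i) + (∑ i, 𝒜 W i * 𝒜 G i)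
            + tinner W Δt * (∑ i, 𝒜 W i * 𝒜 W i) := by
        rw [Finset.sum_congr rfl fun i _ => e4 i, Finset.sum_add_distrib,
          Finset.sum_add_distrib, ← Finset.mul_sum]
      rw [e3]
      linarith only [e2]
    -- bound 1 : the P term
    have hPs : P.IsSymm := isSymm_projPerp w hDs
    have hPr : P.rank ≤ 2 * r + 2 := by
      rw [hPdef]
      have := rank_projPerp_le w D
      omega
    have hfrobP : frobNorm P ≤ Real.sqrt (2 * (r:ℝ)) * specΔ + s := by
      have h1 : frobNorm P ≤ frobNorm D := frob_projPerp_le w hwu D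
      have h2 : frobNorm D ≤ frobNorm Δt + frobNorm F := by
        have e : D = Δt + -F := by rw [hF]; abel
        calc frobNorm D = frobNorm (Δt + -F) := by rw [← e]
          _ ≤ frobNorm Δt + frobNorm (-F) := frobNorm_triangle _ _
          _ = frobNorm Δt + frobNorm F := by rw [frobNorm_neg]
      have h3 : frobNorm F ≤ s := hfrobF
      linarith only [h1, h2, h3, hfrobΔt]
    have hvecP : vecNorm (𝒜 P) ≤ Real.sqrt 2 * frobNorm P := by
      have h1 := (hRIP P hPs hPr).2
      have h2 : (1 + δ) * frobNorm P ^ 2 ≤ 2 * frobNorm P ^ 2 :=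
        mul_le_mul_of_nonneg_right (by linarith only [hδ1]) (sq_nonneg _)
      rw [vecNorm]
      have h3 := Real.sqrt_le_sqrt (h1.trans h2)
      calc Real.sqrt (∑ i, 𝒜 P i ^ 2) ≤ Real.sqrt (2 * frobNorm P ^ 2) := h3
        _ = Real.sqrt 2 * frobNorm P := by
            rw [Real.sqrt_mul (by norm_num : (0:ℝ) ≤ 2), Real.sqrt_sq (frobNorm_nonneg P)]
    have hWP0 : tinner W P = 0 := by
      rw [hPdef, hPW, tinner_sub_right, tinner_smul_right, hWW]
      ring
    have hadjP : (∑ i, 𝒜 W i * 𝒜 P i) = tinner W (𝒜s (𝒜 P)) := by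
      rw [tinner_comm, hadj (𝒜 P) W hWs]
      exact Finset.sum_congr rfl fun i _ => mul_comm _ _
    have hb1 : |(∑ i, 𝒜 W i * 𝒜 P i) - tinner W P|
        ≤ 4 * τ * (Real.sqrt 2 * (Real.sqrt (2 * (r:ℝ)) * specΔ + s)) := by
      rw [hWP0, sub_zero, hadjP]
      refine le_trans hkeyw ?_
      have h4 : vecNorm (𝒜 P) ≤ Real.sqrt 2 * (Real.sqrt (2 * (r:ℝ)) * specΔ + s) := by
        refine le_trans hvecP ?_
        exact mul_le_mul_of_nonneg_left hfrobP hsqrt20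
      have h5 : (0:ℝ) ≤ 4 * τ := by positivity
      exact mul_le_mul_of_nonneg_left h4 h5
    -- bound 2 : the W term
    have hb2 : |tinner W Δt * ((∑ i, 𝒜 W i * 𝒜 W i) - tinner W W)| ≤ specΔ * δ := by
      rw [abs_mul]
      have h1 : |tinner W Δt| ≤ specΔ := tinner_quadform_le w hwu Δt
      have h2 : |(∑ i, 𝒜 W i * 𝒜 W i) - tinner W W| ≤ δ := by
        have h3 := cross_bound δ 𝒜 hRIP W W hWs hWs (by omega)
        rwa [hfrobW, mul_one, mul_one] at h3
      exact mul_le_mul h1 h2 (abs_nonneg _) hspec0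
    -- bound 3 : the G term
    have hGs : G.IsSymm := isSymm_projPerp w hFs
    have hGr : G.rank ≤ 2 * (2 * r + 1) := by
      rw [hG]
      have h1 := rank_projPerp_le w F
      have h2 : F.rank ≤ 2 * r + 2 * r := by
        have e : F = Δt + (-1 : ℝ) • D := by rw [hF, neg_one_smul, sub_eq_add_neg]
        rw [e]
        exact le_trans (matrank_add_le _ _) (add_le_add hΔtr ((rank_smul_le _ _).trans hDr))
      omega
    have hfrobG : frobNorm G ≤ s := (frob_projPerp_le w hwu F).trans hfrobF
    have hb3 : |(∑ i, 𝒜 W i * 𝒜 G i) - tinner W G| ≤ 2 * δ * s := by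
      obtain ⟨G₁, G₂, hGeq, hG1s, hG2s, hG1r, hG2r, hG1f, hG2f⟩ :=
        split_matrix (2 * r + 1) G hGs hGr
      have e1 : ∀ i, 𝒜 G i = 𝒜 G₁ i + 𝒜 G₂ i := by
        intro i
        rw [hGeq, map_add]
        rfl
      have e2 : (∑ i, 𝒜 W i * 𝒜 G i) - tinner W G
          = ((∑ i, 𝒜 W i * 𝒜 G₁ i) - tinner W G₁)
            + ((∑ i, 𝒜 W i * 𝒜 G₂ i) - tinner W G₂) := by
        rw [hGeq, tinner_add_right]
        have e3 : ∀ i, 𝒜 W i * 𝒜 (G₁ + G₂) i = 𝒜 W i * 𝒜 G₁ i + 𝒜 W i * 𝒜 G₂ i := by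
          intro i
          rw [map_add]
          show 𝒜 W i * (𝒜 G₁ i + 𝒜 G₂ i) = _
          ring
        rw [Finset.sum_congr rfl fun i _ => e3 i, Finset.sum_add_distrib]
        ring
      have hc1 := cross_bound δ 𝒜 hRIP W G₁ hWs hG1s (by omega)
      have hc2 := cross_bound δ 𝒜 hRIP W G₂ hWs hG2s (by omega)
      rw [hfrobW, mul_one] at hc1 hc2
      have hδ1' : δ * frobNorm G₁ ≤ δ * s :=
        mul_le_mul_of_nonneg_left (hG1f.trans hfrobG) hδ0
      have hδ2' : δ * frobNorm G₂ ≤ δ * s :=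
        mul_le_mul_of_nonneg_left (hG2f.trans hfrobG) hδ0
      rw [e2]
      calc |_ + _| ≤ _ := abs_add_le _ _
        _ ≤ 2 * δ * s := by linarith only [hc1, hc2, hδ1', hδ2']
    -- combine
    have habs : |tinner W (𝒜s (𝒜 Δt) - Δt)|
        ≤ |(∑ i, 𝒜 W i * 𝒜 P i) - tinner W P| + |(∑ i, 𝒜 W i * 𝒜 G i) - tinner W G|
          + |tinner W Δt * ((∑ i, 𝒜 W i * 𝒜 W i) - tinner W W)| := by
      rw [hq1, hsplitq]
      exact (abs_add_le _ _).trans (add_le_add_left (abs_add_le _ _) _)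
    rw [hK]
    linarith only [hb1, hb2, hb3, habs]
  -- apply net bound
  have hnb := net_bound hMs Net hne hunit hnet K hK0 hperW
  refine le_trans hnb ?_
  rw [hρτ, hK]
  have e1 : 8 * Real.sqrt 2 * (Real.sqrt (2 * (r:ℝ)) * τ * specΔ)
      ≤ 16 * (Real.sqrt (2 * (r:ℝ)) * τ * specΔ) := by
    nlinarith [hsqrt2, mul_nonneg (mul_nonneg hsqrt2r0 hτ0) hspec0]
  have e2 : 8 * Real.sqrt 2 * (τ * s) ≤ 16 * (τ * s) := by
    nlinarith [hsqrt2, mul_nonneg hτ0 hs0]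
  nlinarith [e1, e2, hδ0, hs0, hspec0, hτ0]
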